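/- In the winner-bid auction with ties to h, if σ is a Nash equilibrium with payoff-determinant bid p > c_l (i.e., π_l(σ) > c_l), and {σ^λ} is a sequence of weakly payoff monotone profiles converging to σ, then for all sufficiently large λ the expected bid of the low-valuation agent is strictly less than the expected bid of the high-valuation agent: E_{σ_l^λ}(b) < E_{σ_h^λ}(b). -/
import Mathlib


open Finset Filter

/-- Payoff to the low-valuation agent in the winner-bid auction when she bids `b`
and the high-valuation agent bids `r` (ties won by the high-valuation agent). -/
noncomputable def UlWB (vl : ℕ) (b r : ℕ) : ℝ := if r < b then (vl : ℝ) - b else (r : ℝ)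

/-- Payoff to the high-valuation agent in the winner-bid auction when she bids `b`
and the low-valuation agent bids `r` (ties won by the high-valuation agent). -/
noncomputable def UhWB (vh : ℕ) (b r : ℕ) : ℝ := if r ≤ b then (vh : ℝ) - b else (r : ℝ)

/-- A mixed strategy on the bid set `{0, ..., pbar}`. -/
def IsMixed (pbar : ℕ) (σ : ℕ → ℝ) : Prop :=
  (∀ b, 0 ≤ σ b) ∧ (∀ b, pbar < b → σ b = 0) ∧ ∑ b ∈ Finset.range (pbar + 1), σ b = 1

/-- Expected payoff for the low-valuation agent of bidding `b` against `σh`. -/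
noncomputable def eUl (pbar vl : ℕ) (σh : ℕ → ℝ) (b : ℕ) : ℝ :=
  ∑ r ∈ Finset.range (pbar + 1), σh r * UlWB vl b r

/-- Expected payoff for the high-valuation agent of bidding `b` against `σl`. -/
noncomputable def eUh (pbar vh : ℕ) (σl : ℕ → ℝ) (b : ℕ) : ℝ :=
  ∑ r ∈ Finset.range (pbar + 1), σl r * UhWB vh b r

/-- Nash equilibrium of the winner-bid auction. -/
def IsNashWB (pbar vl vh : ℕ) (σl σh : ℕ → ℝ) : Prop :=
  IsMixed pbar σl ∧ IsMixed pbar σh ∧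
  (∀ b ≤ pbar, 0 < σl b → ∀ b' ≤ pbar, eUl pbar vl σh b' ≤ eUl pbar vl σh b) ∧
  (∀ b ≤ pbar, 0 < σh b → ∀ b' ≤ pbar, eUh pbar vh σl b' ≤ eUh pbar vh σl b)

/-- Expected payoff of the low-valuation agent at a mixed profile. -/
noncomputable def piL (pbar vl : ℕ) (σl σh : ℕ → ℝ) : ℝ :=
  ∑ b ∈ Finset.range (pbar + 1), σl b * eUl pbar vl σh b

/-- Expected payoff of the high-valuation agent at a mixed profile. -/
noncomputable def piH (pbar vh : ℕ) (σl σh : ℕ → ℝ) : ℝ :=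
  ∑ b ∈ Finset.range (pbar + 1), σh b * eUh pbar vh σl b

/-- Weak payoff monotonicity for the low-valuation agent. -/
def WPMl (pbar vl : ℕ) (σl σh : ℕ → ℝ) : Prop :=
  ∀ a ≤ pbar, ∀ b ≤ pbar, σl b < σl a → eUl pbar vl σh b < eUl pbar vl σh a

/-- Weak payoff monotonicity for the high-valuation agent. -/
def WPMh (pbar vh : ℕ) (σl σh : ℕ → ℝ) : Prop :=
  ∀ a ≤ pbar, ∀ b ≤ pbar, σh b < σh a → eUh pbar vh σl b < eUh pbar vh σl a

/-- Expected bid under a mixed strategy. -/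
noncomputable def Ebid (pbar : ℕ) (σ : ℕ → ℝ) : ℝ :=
  ∑ b ∈ Finset.range (pbar + 1), σ b * b

/-- If `σ` is a Nash equilibrium of the winner-bid auction with payoff-determinant bid
`p > cl`, and `σ^λ` is a sequence of weakly payoff monotone profiles converging to `σ`, then
eventually the low-valuation agent's expected bid is strictly below the high-valuation
agent's expected bid. -/
theorem stmt18 (pbar vl vh cl ch : ℕ) (hvl : vl = 2 * cl) (hvh : vh = 2 * ch)
    (hcl : 0 < cl) (hclch : cl < ch) (hpbar : ch ≤ pbar)
    (σl σh : ℕ → ℝ) (hNash : IsNashWB pbar vl vh σl σh)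
    (p : ℕ) (hp1 : cl < p) (hp2 : p ≤ ch)
    (hsuppl : ∀ b, 0 < σl b → b ≤ p) (hsupph : ∀ b, 0 < σh b → p ≤ b)
    (hpl : 0 < σl p) (hph : 0 < σh p)
    (σsl σsh : ℕ → ℕ → ℝ)
    (hmix : ∀ n, IsMixed pbar (σsl n) ∧ IsMixed pbar (σsh n))
    (hwpm : ∀ n, WPMl pbar vl (σsl n) (σsh n) ∧ WPMh pbar vh (σsl n) (σsh n))
    (hconvl : ∀ b, Tendsto (fun n => σsl n b) atTop (nhds (σl b)))
    (hconvh : ∀ b, Tendsto (fun n => σsh n b) atTop (nhds (σh b))) :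
    ∃ N : ℕ, ∀ n ≥ N, Ebid pbar (σsl n) < Ebid pbar (σsh n) := by
  obtain ⟨q, rfl⟩ : ∃ q, p = q + 1 := ⟨p - 1, by omega⟩
  have hq1pbar : q + 1 ≤ pbar := le_trans hp2 hpbar
  -- Key: bidding q is always weakly better than bidding q+1 for the low agent
  have key : ∀ σ' : ℕ → ℝ, (∀ r, 0 ≤ σ' r) →
      eUl pbar vl σ' (q + 1) ≤ eUl pbar vl σ' q := by
    intro σ' hσ'
    unfold eUl
    apply Finset.sum_le_sum
    intro r _
    apply mul_le_mul_of_nonneg_left _ (hσ' r)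
    unfold UlWB
    have hvlq : (vl : ℝ) ≤ 2 * q := by
      have : vl ≤ 2 * q := by omega
      exact_mod_cast this
    split_ifs with h1 h2 h2
    · push_cast; linarith
    · have hr : r = q := by omega
      subst hr
      push_cast
      linarith
    · omega
    · exact le_rfl
  have hstep : ∀ n, σsl n (q + 1) ≤ σsl n q := by
    intro n
    by_contra h
    push_neg at h
    have hlt := (hwpm n).1 (q + 1) hq1pbar q (by omega) h
    exact absurd hlt (not_lt.mpr (key (σsh n) ((hmix n).2.1)))
  have hlim : σl (q + 1) ≤ σl q :=
    le_of_tendsto_of_tendsto' (hconvl (q + 1)) (hconvl q) hstep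
  have hql : 0 < σl q := lt_of_lt_of_le hpl hlim
  have hsum_l : ∑ b ∈ Finset.range (pbar + 1), σl b = 1 := hNash.1.2.2
  have hsum_h : ∑ b ∈ Finset.range (pbar + 1), σh b = 1 := hNash.2.1.2.2
  -- upper bound on low agent's expected bid
  have hEl : Ebid pbar σl ≤ ((q : ℝ) + 1) - σl q := by
    have h1 : σl q * (((q : ℝ) + 1) - q) ≤
        ∑ b ∈ Finset.range (pbar + 1), σl b * (((q : ℝ) + 1) - b) := by
      apply Finset.single_le_sum (f := fun b => σl b * (((q : ℝ) + 1) - b))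
      · intro b _
        rcases lt_or_eq_of_le (hNash.1.1 b) with hb | hb
        · have hb2 : b ≤ q + 1 := hsuppl b hb
          have : (b : ℝ) ≤ (q : ℝ) + 1 := by exact_mod_cast hb2
          have := le_of_lt hb
          nlinarith
        · rw [← hb]; simp
      · exact Finset.mem_range.mpr (by omega)
    have expand : ∑ b ∈ Finset.range (pbar + 1), σl b * (((q : ℝ) + 1) - b) =
        ((q : ℝ) + 1) - Ebid pbar σl := by
      unfold Ebid
      simp only [mul_sub]
      rw [Finset.sum_sub_distrib, ← Finset.sum_mul, hsum_l, one_mul]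
    rw [expand] at h1
    have : σl q * (((q : ℝ) + 1) - q) = σl q := by ring
    linarith [this ▸ h1]
  -- lower bound on high agent's expected bid
  have hEh : ((q : ℝ) + 1) ≤ Ebid pbar σh := by
    have h1 : ∑ b ∈ Finset.range (pbar + 1), σh b * ((q : ℝ) + 1) ≤
        Ebid pbar σh := by
      unfold Ebid
      apply Finset.sum_le_sum
      intro b _
      rcases lt_or_eq_of_le (hNash.2.1.1 b) with hb | hb
      · have hb2 : q + 1 ≤ b := hsupph b hb
        have : (q : ℝ) + 1 ≤ (b : ℝ) := by exact_mod_cast hb2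
        nlinarith
      · rw [← hb]; simp
    calc ((q : ℝ) + 1) = ∑ b ∈ Finset.range (pbar + 1), σh b * ((q : ℝ) + 1) := by
          rw [← Finset.sum_mul, hsum_h, one_mul]
      _ ≤ Ebid pbar σh := h1
  have hlt : Ebid pbar σl < Ebid pbar σh := by linarith
  have hTl : Tendsto (fun n => Ebid pbar (σsl n)) atTop (nhds (Ebid pbar σl)) := by
    unfold Ebid
    exact tendsto_finset_sum _ (fun b _ => (hconvl b).mul_const _)
  have hTh : Tendsto (fun n => Ebid pbar (σsh n)) atTop (nhds (Ebid pbar σh)) := by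
    unfold Ebid
    exact tendsto_finset_sum _ (fun b _ => (hconvh b).mul_const _)
  have hev := hTl.eventually_lt hTh hlt
  rw [eventually_atTop] at hev
  exact hev
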